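/- arXiv:2008.00505 — 2 statements merged into one kernel-verified Lean document; each statement's English description precedes it below -/
import Mathlib

section
/- For every natural number n ≥ 2 and every ε > 0, the first component of the Lie bracket [fₙ, fₙ₊₁], namely ε⁴(2n²+6n+3)/(4n²+8n+3), is strictly positive; hence the vectors fₙ(p), fₙ₊₁(p), and [fₙ, fₙ₊₁](p) span ℝ³ at every point p ∈ ℝ³. -/
set_option maxHeartbeats 1000000

/-- Lie bracket of vector fields on ℝ³ (as ℝ × ℝ × ℝ). -/
noncomputable def lieBracketVF (X Y : ℝ × ℝ × ℝ → ℝ × ℝ × ℝ) (p : ℝ × ℝ × ℝ) :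
    ℝ × ℝ × ℝ :=
  fderiv ℝ Y p (X p) - fderiv ℝ X p (Y p)

lemma span_aux (a b d : ℝ) (hd : d ≠ 0) :
    Submodule.span ℝ ({(a, 1, 0), (b, 0, 1), (d, 0, 0)} : Set (ℝ × ℝ × ℝ)) = ⊤ := by
  rw [Submodule.eq_top_iff']
  intro x
  have h1 : (a, (1:ℝ), (0:ℝ)) ∈ Submodule.span ℝ ({(a, 1, 0), (b, 0, 1), (d, 0, 0)} : Set (ℝ × ℝ × ℝ)) :=
    Submodule.subset_span (by simp)
  have h2 : (b, (0:ℝ), (1:ℝ)) ∈ Submodule.span ℝ ({(a, 1, 0), (b, 0, 1), (d, 0, 0)} : Set (ℝ × ℝ × ℝ)) :=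
    Submodule.subset_span (by simp)
  have h3 : (d, (0:ℝ), (0:ℝ)) ∈ Submodule.span ℝ ({(a, 1, 0), (b, 0, 1), (d, 0, 0)} : Set (ℝ × ℝ × ℝ)) :=
    Submodule.subset_span (by simp)
  have hx : x = x.2.1 • (a, (1:ℝ), (0:ℝ)) + x.2.2 • (b, (0:ℝ), (1:ℝ))
      + ((x.1 - x.2.1 * a - x.2.2 * b) / d) • (d, (0:ℝ), (0:ℝ)) := by
    ext <;> simp <;> field_simp <;> ring
  rw [hx]
  exact Submodule.add_mem _ (Submodule.add_mem _ (Submodule.smul_mem _ _ h1)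
    (Submodule.smul_mem _ _ h2)) (Submodule.smul_mem _ _ h3)

/-- for every `n ≥ 2` and `ε > 0`, the first component of
`[fₙ, fₙ₊₁]`, namely `ε⁴(2n²+6n+3)/(4n²+8n+3)`, is strictly positive; hence
`fₙ(p)`, `fₙ₊₁(p)` and `[fₙ, fₙ₊₁](p)` span ℝ³ at every point `p`. -/
theorem radial_swimmer_bracket_pos_and_span (ε : ℝ) (hε : 0 < ε) (n : ℕ) (hn : 2 ≤ n)
    (f fsucc : ℝ × ℝ × ℝ → ℝ × ℝ × ℝ)
    (hf : ∀ p : ℝ × ℝ × ℝ,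
      f p = (-(ε ^ 2) * ((n : ℝ) ^ 2 - 4 * n - 2) * p.2.2 /
        ((2 * (n : ℝ) + 1) * (2 * (n : ℝ) + 3)), 1, 0))
    (hfsucc : ∀ p : ℝ × ℝ × ℝ,
      fsucc p = (ε ^ 2 * ((n : ℝ) + 1) ^ 2 * p.2.1 /
        ((2 * (n : ℝ) + 1) * (2 * (n : ℝ) + 3)), 0, 1)) :
    0 < ε ^ 4 * (2 * (n : ℝ) ^ 2 + 6 * n + 3) / (4 * (n : ℝ) ^ 2 + 8 * n + 3) ∧
    ∀ p : ℝ × ℝ × ℝ,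
      Submodule.span ℝ ({f p, fsucc p, lieBracketVF f fsucc p} :
        Set (ℝ × ℝ × ℝ)) = ⊤ := by
  have hn2 : (2:ℝ) ≤ (n:ℝ) := by exact_mod_cast hn
  set D : ℝ := (2 * (n : ℝ) + 1) * (2 * (n : ℝ) + 3) with hD
  have hDpos : 0 < D := by positivity
  set c1 : ℝ := -(ε ^ 2) * ((n : ℝ) ^ 2 - 4 * n - 2) / D with hc1
  set c2 : ℝ := ε ^ 2 * ((n : ℝ) + 1) ^ 2 / D with hc2
  -- linear maps
  have hfeq : f = fun p : ℝ × ℝ × ℝ => (c1 * p.2.2, (1:ℝ), (0:ℝ)) := by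
    funext p; rw [hf p]; simp [hc1]; ring
  have hgeq : fsucc = fun p : ℝ × ℝ × ℝ => (c2 * p.2.1, (0:ℝ), (1:ℝ)) := by
    funext p; rw [hfsucc p]; simp [hc2]; ring
  set L1 : (ℝ × ℝ × ℝ) →L[ℝ] (ℝ × ℝ × ℝ) :=
    (c1 • ((ContinuousLinearMap.snd ℝ ℝ ℝ).comp (ContinuousLinearMap.snd ℝ ℝ (ℝ × ℝ)))).prod 0 with hL1
  set L2 : (ℝ × ℝ × ℝ) →L[ℝ] (ℝ × ℝ × ℝ) :=
    (c2 • ((ContinuousLinearMap.fst ℝ ℝ ℝ).comp (ContinuousLinearMap.snd ℝ ℝ (ℝ × ℝ)))).prod 0 with hL2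
  have hdf : ∀ p, HasFDerivAt f L1 p := by
    intro p
    rw [hfeq]
    exact HasFDerivAt.prodMk ((hasFDerivAt_snd (𝕜 := ℝ) (p := p)).snd.const_mul c1) (hasFDerivAt_const ((1:ℝ), (0:ℝ)) p)
  have hdg : ∀ p, HasFDerivAt fsucc L2 p := by
    intro p
    rw [hgeq]
    exact HasFDerivAt.prodMk ((hasFDerivAt_snd (𝕜 := ℝ) (p := p)).fst.const_mul c2) (hasFDerivAt_const ((0:ℝ), (1:ℝ)) p)
  have hbr : ∀ p, lieBracketVF f fsucc p = (c2 - c1, 0, 0) := by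
    intro p
    unfold lieBracketVF
    rw [(hdg p).fderiv, (hdf p).fderiv, hfeq, hgeq]
    simp [hL1, hL2, Prod.ext_iff]
  have hne : c2 - c1 ≠ 0 := by
    have : c2 - c1 = ε ^ 2 * (2 * (n:ℝ) ^ 2 - 2 * n - 1) / D := by
      rw [hc1, hc2]; field_simp; ring
    rw [this]
    have h2 : 0 < 2 * (n:ℝ) ^ 2 - 2 * n - 1 := by nlinarith
    positivity
  constructor
  · have : (0:ℝ) < (n:ℝ) := by linarith
    positivity
  · intro p
    have e1 : f p = (c1 * p.2.2, 1, 0) := by rw [hfeq]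
    have e2 : fsucc p = (c2 * p.2.1, 0, 1) := by rw [hgeq]
    rw [e1, e2, hbr p]
    exact span_aux _ _ _ hne
end

section
/- For every ε > 0 and n ≥ 2, the distribution spanned by the vector fields fₙ and fₙ₊₁ of the radial swimmer is bracket-generating on all of ℝ³ (its Lie algebra evaluated at each point is all of ℝ³); hence by the Chow–Rashevskii theorem the system is controllable: any two points of ℝ³ can be joined by a horizontal path. -/
private lemma P5 (a0 a1 a2 a3 a4 a5 : ℝ) (t : ℝ) :
    HasDerivAt (fun τ : ℝ => a0 + a1 * τ + a2 * τ ^ 2 + a3 * τ ^ 3 + a4 * τ ^ 4 + a5 * τ ^ 5)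
      (a1 + 2 * a2 * t + 3 * a3 * t ^ 2 + 4 * a4 * t ^ 3 + 5 * a5 * t ^ 4) t := by
  have h : HasDerivAt
      (fun τ : ℝ => a0 + a1 * τ + a2 * τ ^ 2 + a3 * τ ^ 3 + a4 * τ ^ 4 + a5 * τ ^ 5)
      (0 + a1 * 1 + a2 * ((2 : ℕ) * t ^ (2 - 1)) + a3 * ((3 : ℕ) * t ^ (3 - 1))
        + a4 * ((4 : ℕ) * t ^ (4 - 1)) + a5 * ((5 : ℕ) * t ^ (5 - 1))) t := by
    exact ((((((hasDerivAt_const t a0).add ((hasDerivAt_id t).const_mul a1)).add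
      ((hasDerivAt_pow 2 t).const_mul a2)).add ((hasDerivAt_pow 3 t).const_mul a3)).add
      ((hasDerivAt_pow 4 t).const_mul a4)).add ((hasDerivAt_pow 5 t).const_mul a5))
  convert h using 1
  push_cast
  ring

set_option maxHeartbeats 2000000 in
private lemma controllable_aux (c1 c2 : ℝ) (hc : c1 ≠ c2) (p q : ℝ × ℝ × ℝ) :
    ∃ (γ : ℝ → ℝ × ℝ × ℝ) (u1 u2 : ℝ → ℝ), γ 0 = p ∧ γ 1 = q ∧
      ∀ t : ℝ, HasDerivAt γ
        (u1 t • ((c1 * (γ t).2.2, 1, 0) : ℝ × ℝ × ℝ) +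
         u2 t • ((c2 * (γ t).2.1, 0, 1) : ℝ × ℝ × ℝ)) t := by
  obtain ⟨x0, y0, z0⟩ := p
  obtain ⟨x1, y1, z1⟩ := q
  have hc' : c1 - c2 ≠ 0 := sub_ne_zero.mpr hc
  set dy : ℝ := y1 - y0 with hdy
  set dz : ℝ := z1 - z0 with hdz
  set s : ℝ := 30 * (x1 - (x0 + c2 * dz / 6 + c2 * dy * dz / 2 + c2 * y0 * dz
      - c1 * dz / 6 + c1 * dy * dz / 2 + c1 * z0 * dy)) / (c1 - c2) with hs
  refine ⟨fun τ : ℝ => ((x0 + (c2*y0*s + c2*y0*dz + c1*z0 + c1*z0*dy) * τ + (c2*s/2 + c2*dz/2 + c2*dy*s/2 + c2*dy*dz/2 - 3*c2*y0*s + c1*s/2 + c1*dz/2 + c1*dy*s/2 + c1*dy*dz/2 - c1*z0) * τ ^ 2 + (-(7*c2*s/3) - c2*dz/3 - 2*c2*dy*s + 2*c2*y0*s - 5*c1*s/3 - 2*c1*dz/3 - c1*dy*s) * τ ^ 3 + (3*c2*s + 3*c2*dy*s/2 + 2*c1*s + c1*dy*s/2) * τ ^ 4 + (-(6*c2*s/5)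 - 4*c1*s/5) * τ ^ 5, y0 + (dy + 1) * τ + (-1) * τ ^ 2 + (0) * τ ^ 3 + (0) * τ ^ 4 + (0) * τ ^ 5, z0 + (dz + s) * τ + (-3*s) * τ ^ 2 + (2*s) * τ ^ 3 + (0) * τ ^ 4 + (0) * τ ^ 5) : ℝ × ℝ × ℝ),
    fun t : ℝ => (dy + 1) + 2 * (-1) * t + 3 * (0) * t ^ 2 + 4 * (0) * t ^ 3 + 5 * (0) * t ^ 4, fun t : ℝ => (dz + s) + 2 * (-3*s) * t + 3 * (2*s) * t ^ 2 + 4 * (0) * t ^ 3 + 5 * (0) * t ^ 4, ?_, ?_, fun t => ?_⟩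
  · simp only [Prod.mk.injEq]
    refine ⟨by ring, by ring, by ring⟩
  · simp only [Prod.mk.injEq]
    refine ⟨?_, by rw [hdy]; ring, by rw [hdz]; ring⟩
    rw [hs]
    field_simp
    ring
  · have hx : HasDerivAt (fun τ : ℝ => x0 + (c2*y0*s + c2*y0*dz + c1*z0 + c1*z0*dy) * τ + (c2*s/2 + c2*dz/2 + c2*dy*s/2 + c2*dy*dz/2 - 3*c2*y0*s + c1*s/2 + c1*dz/2 + c1*dy*s/2 + c1*dy*dz/2 - c1*z0) * τ ^ 2 + (-(7*c2*s/3) - c2*dz/3 - 2*c2*dy*s + 2*c2*y0*s - 5*c1*s/3 - 2*c1*dz/3 - c1*dy*s) * τ ^ 3 + (3*c2*s + 3*c2*dy*s/2 + 2*c1*s + c1*dy*s/2) * τ ^ 4 + (-(6*c2*s/5) - 4*c1*s/5) * τ ^ 5) ((c2*y0*s + c2*y0*dz + c1*z0 + c1*z0*dy) + 2 * (c2*s/2 + c2*dz/2 + c2*dy*s/2 + c2*dy*dz/2 - 3*c2*y0*s + c1*s/2 + c1*dz/2 + c1*dy*s/2 + c1*dy*dz/2 - c1*z0) * t + 3 *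 (-(7*c2*s/3) - c2*dz/3 - 2*c2*dy*s + 2*c2*y0*s - 5*c1*s/3 - 2*c1*dz/3 - c1*dy*s) * t ^ 2 + 4 * (3*c2*s + 3*c2*dy*s/2 + 2*c1*s + c1*dy*s/2) * t ^ 3 + 5 * (-(6*c2*s/5) - 4*c1*s/5) * t ^ 4) t := P5 _ _ _ _ _ _ t
    have hy : HasDerivAt (fun τ : ℝ => y0 + (dy + 1) * τ + (-1) * τ ^ 2 + (0) * τ ^ 3 + (0) * τ ^ 4 + (0) * τ ^ 5) ((dy + 1) + 2 * (-1) * t + 3 * (0) * t ^ 2 + 4 * (0) * t ^ 3 + 5 * (0) * t ^ 4) t := P5 _ _ _ _ _ _ t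
    have hz : HasDerivAt (fun τ : ℝ => z0 + (dz + s) * τ + (-3*s) * τ ^ 2 + (2*s) * τ ^ 3 + (0) * τ ^ 4 + (0) * τ ^ 5) ((dz + s) + 2 * (-3*s) * t + 3 * (2*s) * t ^ 2 + 4 * (0) * t ^ 3 + 5 * (0) * t ^ 4) t := P5 _ _ _ _ _ _ t
    have hγ := hx.prodMk (hy.prodMk hz)
    convert hγ using 1
    simp only [Prod.smul_mk, smul_eq_mul, Prod.mk_add_mk, Prod.mk.injEq]
    refine ⟨by ring, by ring, by ring⟩

private lemma fderiv_comp22 (c : ℝ) (f : ℝ × ℝ × ℝ → ℝ × ℝ × ℝ)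
    (hf : ∀ p : ℝ × ℝ × ℝ, f p = (c * p.2.2, 1, 0)) (p v : ℝ × ℝ × ℝ) :
    fderiv ℝ f p v = (c * v.2.2, 0, 0) := by
  have hfe : f = fun p : ℝ × ℝ × ℝ => ((c * p.2.2, 1, 0) : ℝ × ℝ × ℝ) := funext hf
  set L : ℝ × ℝ × ℝ →L[ℝ] ℝ × ℝ × ℝ :=
    (c • ((ContinuousLinearMap.snd ℝ ℝ ℝ).comp (ContinuousLinearMap.snd ℝ ℝ (ℝ × ℝ)))).prod 0
    with hL
  have hd : HasFDerivAt f L p := by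
    rw [hfe]
    have he : (fun p : ℝ × ℝ × ℝ => ((c * p.2.2, 1, 0) : ℝ × ℝ × ℝ))
        = fun p : ℝ × ℝ × ℝ => L p + ((0 : ℝ), (1 : ℝ), (0 : ℝ)) := by
      funext p
      simp [hL, Prod.ext_iff]
    rw [he]
    exact L.hasFDerivAt.add_const _
  rw [hd.fderiv]
  simp [hL]
  rfl

private lemma fderiv_comp21 (c : ℝ) (f : ℝ × ℝ × ℝ → ℝ × ℝ × ℝ)
    (hf : ∀ p : ℝ × ℝ × ℝ, f p = (c * p.2.1, 0, 1)) (p v : ℝ × ℝ × ℝ) :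
    fderiv ℝ f p v = (c * v.2.1, 0, 0) := by
  have hfe : f = fun p : ℝ × ℝ × ℝ => ((c * p.2.1, 0, 1) : ℝ × ℝ × ℝ) := funext hf
  set L : ℝ × ℝ × ℝ →L[ℝ] ℝ × ℝ × ℝ :=
    (c • ((ContinuousLinearMap.fst ℝ ℝ ℝ).comp (ContinuousLinearMap.snd ℝ ℝ (ℝ × ℝ)))).prod 0
    with hL
  have hd : HasFDerivAt f L p := by
    rw [hfe]
    have he : (fun p : ℝ × ℝ × ℝ => ((c * p.2.1, 0, 1) : ℝ × ℝ × ℝ))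
        = fun p : ℝ × ℝ × ℝ => L p + ((0 : ℝ), (0 : ℝ), (1 : ℝ)) := by
      funext p
      simp [hL, Prod.ext_iff]
    rw [he]
    exact L.hasFDerivAt.add_const _
  rw [hd.fderiv]
  simp [hL]
  rfl

private lemma span_three (a b c : ℝ) (hc : c ≠ 0) :
    Submodule.span ℝ ({((a, 1, 0) : ℝ × ℝ × ℝ), (b, 0, 1), (c, 0, 0)} : Set (ℝ × ℝ × ℝ)) = ⊤ := by
  rw [eq_top_iff]
  rintro ⟨v1, v2, v3⟩ -
  have hv : ((v1, v2, v3) : ℝ × ℝ × ℝ)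
      = v2 • ((a, 1, 0) : ℝ × ℝ × ℝ) + v3 • ((b, 0, 1) : ℝ × ℝ × ℝ)
        + ((v1 - v2 * a - v3 * b) / c) • ((c, 0, 0) : ℝ × ℝ × ℝ) := by
    simp only [Prod.smul_mk, smul_eq_mul, Prod.mk_add_mk, Prod.mk.injEq]
    refine ⟨?_, by ring, by ring⟩
    field_simp
    ring
  rw [hv]
  refine Submodule.add_mem _ (Submodule.add_mem _
    (Submodule.smul_mem _ _ (Submodule.subset_span ?_))
    (Submodule.smul_mem _ _ (Submodule.subset_span ?_)))
    (Submodule.smul_mem _ _ (Submodule.subset_span ?_)) <;> simp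

/-- for every `ε > 0` and `n ≥ 2`, the distribution spanned by the
radial swimmer's vector fields `fₙ, fₙ₊₁` is bracket-generating on ℝ³ (adding
one bracket already spans ℝ³ at each point); hence by Chow–Rashevskii the
system is controllable: any two points of ℝ³ are joined by a horizontal path,
i.e. a C¹ curve whose velocity is everywhere a combination
`u₁(t)·fₙ + u₂(t)·fₙ₊₁`. -/
theorem radial_swimmer_chow_controllable (ε : ℝ) (hε : 0 < ε) (n : ℕ)
    (hn : 2 ≤ n)
    (f fsucc : ℝ × ℝ × ℝ → ℝ × ℝ × ℝ)
    (hf : ∀ p : ℝ × ℝ × ℝ,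
      f p = (-(ε ^ 2) * ((n : ℝ) ^ 2 - 4 * n - 2) * p.2.2 /
        ((2 * (n : ℝ) + 1) * (2 * (n : ℝ) + 3)), 1, 0))
    (hfsucc : ∀ p : ℝ × ℝ × ℝ,
      fsucc p = (ε ^ 2 * ((n : ℝ) + 1) ^ 2 * p.2.1 /
        ((2 * (n : ℝ) + 1) * (2 * (n : ℝ) + 3)), 0, 1)) :
    (∀ p : ℝ × ℝ × ℝ,
      Submodule.span ℝ ({f p, fsucc p, lieBracketVF f fsucc p} :
        Set (ℝ × ℝ × ℝ)) = ⊤) ∧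
    ∀ p q : ℝ × ℝ × ℝ, ∃ (γ : ℝ → ℝ × ℝ × ℝ) (u₁ u₂ : ℝ → ℝ),
      γ 0 = p ∧ γ 1 = q ∧
      ∀ t ∈ Set.Icc (0:ℝ) 1,
        HasDerivAt γ (u₁ t • f (γ t) + u₂ t • fsucc (γ t)) t := by
  have hn' : (2 : ℝ) ≤ (n : ℝ) := by exact_mod_cast hn
  have hD : (0 : ℝ) < (2 * (n : ℝ) + 1) * (2 * (n : ℝ) + 3) := by positivity
  set c1 : ℝ := -(ε ^ 2) * ((n : ℝ) ^ 2 - 4 * n - 2) / ((2 * (n : ℝ) + 1) * (2 * (n : ℝ) + 3))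
    with hc1
  set c2 : ℝ := ε ^ 2 * ((n : ℝ) + 1) ^ 2 / ((2 * (n : ℝ) + 1) * (2 * (n : ℝ) + 3)) with hc2
  have hf' : ∀ p : ℝ × ℝ × ℝ, f p = (c1 * p.2.2, 1, 0) := by
    intro p
    rw [hf p, hc1]
    congr 1
    ring
  have hfsucc' : ∀ p : ℝ × ℝ × ℝ, fsucc p = (c2 * p.2.1, 0, 1) := by
    intro p
    rw [hfsucc p, hc2]
    congr 1
    ring
  have hlt : c1 < c2 := by
    have h2 : (0 : ℝ) < 2 * (n : ℝ) ^ 2 - 2 * n - 1 := by nlinarith [hn']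
    rw [hc1, hc2, div_lt_div_iff_of_pos_right hD]
    nlinarith [mul_pos (pow_pos hε 2) h2]
  have hc : c1 ≠ c2 := ne_of_lt hlt
  constructor
  · intro p
    have hbr : lieBracketVF f fsucc p = (c2 - c1, 0, 0) := by
      unfold lieBracketVF
      rw [fderiv_comp21 c2 fsucc hfsucc' p (f p), fderiv_comp22 c1 f hf' p (fsucc p),
        hf' p, hfsucc' p]
      simp [Prod.ext_iff]
    rw [hf' p, hfsucc' p, hbr]
    exact span_three _ _ _ (sub_ne_zero.mpr hc.symm)
  · intro p q
    obtain ⟨γ, u1, u2, h0, h1, hder⟩ := controllable_aux c1 c2 hc p q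
    refine ⟨γ, u1, u2, h0, h1, fun t _ => ?_⟩
    rw [hf' (γ t), hfsucc' (γ t)]
    exact hder t
end
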